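/- For any finite word w and any 0 < n ≤ |w|, the number of distinct factors of w of length n is at most n + span(w). -/

import Mathlib

open scoped Classical

/-- `u` occurs in `w` starting at (0-based) position `i`. -/
def occursAt {α : Type*} (w u : List α) (i : ℕ) : Prop := (w.drop i).take u.length = u

/-- `u` is a factor of the finite word `w`. -/
def IsFactorOf {α : Type*} (w u : List α) : Prop := ∃ i, occursAt w u i

/-- `Γ` is a string attractor of the finite word `w` (positions are 0-based). -/
def IsAttractor {α : Type*} (w : List α) (Γ : Finset ℕ) : Prop :=
  (∀ k ∈ Γ, k < w.length) ∧
  ∀ u : List α, u ≠ [] → IsFactorOf w u →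
    ∃ i, occursAt w u i ∧ ∃ k ∈ Γ, i ≤ k ∧ k < i + u.length

/-- `γ*(w)`: minimum size of a string attractor of `w`. -/
noncomputable def gammaStar {α : Type*} (w : List α) : ℕ :=
  sInf {n | ∃ Γ : Finset ℕ, IsAttractor w Γ ∧ Γ.card = n}

/-- `span(w)`: minimum of (rightmost − leftmost position) over string attractors of `w`. -/
noncomputable def spanW {α : Type*} (w : List α) : ℕ :=
  sInf {d | ∃ Γ : Finset ℕ, IsAttractor w Γ ∧ sSup (Γ : Set ℕ) - sInf (Γ : Set ℕ) = d}

/-- `lm(w)`: minimum rightmost position over string attractors of `w`. -/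
noncomputable def lmW {α : Type*} (w : List α) : ℕ :=
  sInf {m | ∃ Γ : Finset ℕ, IsAttractor w Γ ∧ sSup (Γ : Set ℕ) = m}

/-- prefix of length `n` of the infinite word `x`. -/
def pref {α : Type*} (x : ℕ → α) (n : ℕ) : List α := (List.range n).map x

/-- the factor of length `m` of `x` starting at position `i`. -/
def factorAt {α : Type*} (x : ℕ → α) (i m : ℕ) : List α := (List.range m).map (fun t => x (i + t))

/-- `u` is a factor of the infinite word `x`. -/
def IsFactorInf {α : Type*} (x : ℕ → α) (u : List α) : Prop := ∃ i, u = factorAt x i u.length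

/-- factor complexity `p_x(n)`. -/
noncomputable def complexity {α : Type*} (x : ℕ → α) (n : ℕ) : ℕ :=
  {u : List α | u.length = n ∧ IsFactorInf x u}.ncard

/-- appearance function `A_x(n)`: least `m` such that the prefix of length `m`
contains all factors of `x` of length `n`. -/
noncomputable def appearance {α : Type*} (x : ℕ → α) (n : ℕ) : ℕ :=
  sInf {m | ∀ u : List α, u.length = n → IsFactorInf x u → IsFactorOf (pref x m) u}

/-- `x` is ultimately periodic. -/
def UltPeriodic {α : Type*} (x : ℕ → α) : Prop :=
  ∃ p N : ℕ, 0 < p ∧ ∀ i, N ≤ i → x (i + p) = x i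

/-- `x` is recurrent: every factor occurs infinitely often. -/
def Recurrent {α : Type*} (x : ℕ → α) : Prop :=
  ∀ u : List α, IsFactorInf x u → ∀ N : ℕ, ∃ i, N ≤ i ∧ u = factorAt x i u.length

/-- `u ^ k`: the `k`-th power of a finite word. -/
def listPow {α : Type*} (u : List α) : ℕ → List α
  | 0 => []
  | k + 1 => u ++ listPow u k

/-- `x` is ω-power free. -/
def OmegaPowerFree {α : Type*} (x : ℕ → α) : Prop :=
  ∀ u : List α, u ≠ [] → IsFactorInf x u → ∃ k : ℕ, ¬ IsFactorInf x (listPow u k)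

/-- the number of distinct length-`n` factors of `w` is at most `n + span(w)`. -/
theorem stmt7 {α : Type*} (w : List α) (n : ℕ) (h1 : 0 < n) (h2 : n ≤ w.length) :
    {u : List α | u.length = n ∧ IsFactorOf w u}.ncard ≤ n + spanW w := by
  -- the full set of positions is an attractor
  have hwne : w ≠ [] := by
    intro h; rw [h] at h2; simp at h2; omega
  have hfull : IsAttractor w (Finset.range w.length) := by
    constructor
    · intro k hk; simpa using hk
    · rintro u hu ⟨i, hi⟩
      refine ⟨i, hi, i, ?_, le_refl i, ?_⟩
      · simp only [Finset.mem_range]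
        by_contra h
        push_neg at h
        have : w.drop i = [] := List.drop_eq_nil_of_le h
        rw [occursAt, this] at hi
        simp at hi
        exact hu hi
      · have : u.length ≠ 0 := by simpa using hu
        omega
  have hTne : {d | ∃ Γ : Finset ℕ, IsAttractor w Γ ∧ sSup (Γ : Set ℕ) - sInf (Γ : Set ℕ) = d}.Nonempty :=
    ⟨_, Finset.range w.length, hfull, rfl⟩
  obtain ⟨Γ, hΓ, hspan⟩ := Nat.sInf_mem hTne
  -- Γ is nonempty
  have hΓne : (Γ : Set ℕ).Nonempty := by
    obtain ⟨i, hocc, k, hk, _⟩ := hΓ.2 (w.take 1) (by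
      intro h
      have hl := congrArg List.length h
      simp only [List.length_take, List.length_nil] at hl
      omega) ⟨0, by simp [occursAt]⟩
    exact ⟨k, hk⟩
  set a := sInf (Γ : Set ℕ) with ha
  set b := sSup (Γ : Set ℕ) with hb
  have haΓ : a ∈ (Γ : Set ℕ) := Nat.sInf_mem hΓne
  have hbΓ : b ∈ (Γ : Set ℕ) := by
    have : (Γ : Set ℕ).Finite := Γ.finite_toSet
    exact Nat.sSup_mem hΓne (this.bddAbove)
  have hab : a ≤ b := csInf_le_csSup hΓne (OrderBot.bddBelow _) (Γ.finite_toSet.bddAbove)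
  have hble : ∀ k ∈ (Γ : Set ℕ), k ≤ b := fun k hk =>
    le_csSup (Γ.finite_toSet.bddAbove) hk
  have hale : ∀ k ∈ (Γ : Set ℕ), a ≤ k := fun k hk => Nat.sInf_le hk
  -- subset of image
  have hsub : {u : List α | u.length = n ∧ IsFactorOf w u} ⊆
      ↑((Finset.Icc (a + 1 - n) b).image (fun i => (w.drop i).take n)) := by
    rintro u ⟨hlen, hfac⟩
    have hune : u ≠ [] := by
      intro h; rw [h] at hlen; simp at hlen; omega
    obtain ⟨i, hocc, k, hk, hik, hkin⟩ := hΓ.2 u hune hfac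
    simp only [Finset.coe_image, Set.mem_image, Finset.mem_coe, Finset.mem_Icc]
    refine ⟨i, ⟨?_, le_trans hik (hble k hk)⟩, ?_⟩
    · have := hale k hk
      rw [hlen] at hkin
      omega
    · rw [occursAt, hlen] at hocc
      exact hocc
  calc {u : List α | u.length = n ∧ IsFactorOf w u}.ncard
      ≤ ((Finset.Icc (a + 1 - n) b).image (fun i => (w.drop i).take n)).card := by
        rw [← Set.ncard_coe_finset]
        exact Set.ncard_le_ncard hsub (Finset.finite_toSet _)
    _ ≤ (Finset.Icc (a + 1 - n) b).card := Finset.card_image_le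
    _ = b + 1 - (a + 1 - n) := Nat.card_Icc _ _
    _ ≤ n + (b - a) := by omega
    _ = n + spanW w := by rw [hspan]; rfl
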